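/- If t is a head variable free applicative term and σ is a substitution, then (t↓_U)(σ↓_U) = (tσ)↓_U, where σ↓_U maps each variable x to σ(x)↓_U. -/

import Mathlib

/-- First-order terms over a signature `F` with arity function `ar` and variables `V`. -/
inductive Term (F : Type) (ar : F → ℕ) (V : Type) : Type where
  | var : V → Term F ar V
  | app : (f : F) → (Fin (ar f) → Term F ar V) → Term F ar V

namespace Term

variable {F V : Type} {ar : F → ℕ}

/-- Application of a substitution. -/
def subst (σ : V → Term F ar V) : Term F ar V → Term F ar V
  | .var x => σ x
  | .app f ts => .app f (fun i => (ts i).subst σ)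

/-- Size of a term. -/
def size : Term F ar V → ℕ
  | .var _ => 1
  | .app _ ts => 1 + ∑ i, (ts i).size

end Term

section Rewriting

variable {F V : Type} {ar : F → ℕ}

/-- The (reflexive) subterm relation: `Subterm u t` means `u` occurs in `t`. -/
inductive Subterm : Term F ar V → Term F ar V → Prop where
  | refl (t) : Subterm t t
  | app (f) (ts : Fin (ar f) → Term F ar V) (i) (u) :
      Subterm u (ts i) → Subterm u (.app f ts)

/-- Proper subterm: `PSub u t` means `u` is a proper subterm of `t`. -/
def PSub (u t : Term F ar V) : Prop :=
  ∃ (f : F) (ts : Fin (ar f) → Term F ar V) (i : Fin (ar f)),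
    t = Term.app f ts ∧ Subterm u (ts i)

/-- One-step rewrite relation of a TRS `R`: closure of the rules under
contexts and substitutions. -/
inductive Rew (R : Set (Term F ar V × Term F ar V)) : Term F ar V → Term F ar V → Prop where
  | rule (l r : Term F ar V) (σ : V → Term F ar V) :
      (l, r) ∈ R → Rew R (l.subst σ) (r.subst σ)
  | congr (f : F) (ts : Fin (ar f) → Term F ar V) (i : Fin (ar f)) (u : Term F ar V) :
      Rew R (ts i) u → Rew R (.app f ts) (.app f (Function.update ts i u))

/-- Many-step rewriting. -/
def RStar (R : Set (Term F ar V × Term F ar V)) : Term F ar V → Term F ar V → Prop :=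
  Relation.ReflTransGen (Rew R)

/-- Normal forms. -/
def NF (R : Set (Term F ar V × Term F ar V)) (t : Term F ar V) : Prop := ∀ u, ¬ Rew R t u

/-- `t` rewrites to the normal form `u` (w.r.t. `R`). -/
def NormTo (R : Set (Term F ar V × Term F ar V)) (t u : Term F ar V) : Prop :=
  RStar R t u ∧ NF R u

/-- Termination: the rewrite relation is well-founded. -/
def Terminating (R : Set (Term F ar V × Term F ar V)) : Prop :=
  WellFounded (fun t s => Rew R s t)

/-- Confluence. -/
def Confluent (R : Set (Term F ar V × Term F ar V)) : Prop :=
  ∀ s t u, RStar R s t → RStar R s u → ∃ v, RStar R t v ∧ RStar R u v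

/-- Innermost one-step rewriting: the contracted redex has only normal
proper subterms. -/
inductive IRew (R : Set (Term F ar V × Term F ar V)) : Term F ar V → Term F ar V → Prop where
  | rule (l r : Term F ar V) (σ : V → Term F ar V) :
      (l, r) ∈ R → (∀ u, PSub u (l.subst σ) → NF R u) →
      IRew R (l.subst σ) (r.subst σ)
  | congr (f : F) (ts : Fin (ar f) → Term F ar V) (i : Fin (ar f)) (u : Term F ar V) :
      IRew R (ts i) u → IRew R (.app f ts) (.app f (Function.update ts i u))

/-- Innermost termination. -/
def ITerminating (R : Set (Term F ar V × Term F ar V)) : Prop :=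
  WellFounded (fun t s => IRew R s t)

/-- `m`-fold composition of a relation. -/
def RelPow (r : α → α → Prop) : ℕ → α → α → Prop
  | 0 => Eq
  | n + 1 => fun a c => ∃ b, r a b ∧ RelPow r n b c

/-- Derivation height of `t` w.r.t. a relation. -/
noncomputable def dh (r : α → α → Prop) (t : α) : ℕ :=
  sSup { m | ∃ u, RelPow r m t u }

/-- Derivational complexity w.r.t. a relation, restricted to starting terms
satisfying `P`. -/
noncomputable def dcOn {F V : Type} {ar : F → ℕ}
    (r : Term F ar V → Term F ar V → Prop) (P : Term F ar V → Prop) (n : ℕ) : ℕ :=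
  sSup { m | ∃ t, P t ∧ t.size ≤ n ∧ m = dh r t }

/-- `f ∈ O(g)`. -/
def BigO (f g : ℕ → ℕ) : Prop := ∃ M N : ℕ, ∀ n, f n ≤ M * g n + N

end Rewriting
section ATRS

/-- Signature for (un)curried applicative systems: `none` is the binary
application symbol `∘`, and `some (c, i)` is the symbol `c_i` of arity `i`
(with `c_0 = c` an applicative constant). -/
abbrev USig (C : Type) := Option (C × ℕ)

/-- Arity function for `USig`. -/
def uar {C : Type} : USig C → ℕ
  | none => 2
  | some (_, i) => i

/-- Terms over the signature `USig C` (variables are natural numbers). -/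
abbrev ATerm (C : Type) := Term (USig C) uar ℕ

variable {C : Type}

/-- Binary application `s ∘ t`. -/
def appT (s t : ATerm C) : ATerm C :=
  .app none (fun i => if i.1 = 0 then s else t)

/-- The applicative constant `c` (i.e. `c_0`). -/
def constT (c : C) : ATerm C :=
  .app (some (c, 0)) (fun i => (Nat.not_lt_zero _ i.isLt).elim)

/-- Symbols of a purely applicative term: only `∘` and constants `c_0`. -/
def ApplicativeSym : USig C → Prop
  | none => True
  | some (_, i) => i = 0

/-- A term over the applicative signature (constants plus `∘`). -/
def ApplicativeT (t : ATerm C) : Prop :=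
  ∀ (u : ATerm C) (f : USig C) (ts : Fin (uar f) → ATerm C),
    Subterm u t → u = Term.app f ts → ApplicativeSym f

/-- `headCount t = some (c, n)` iff `t = c ∘ t₁ ∘ ⋯ ∘ tₙ` for some terms `tᵢ`. -/
def headCount : ATerm C → Option (C × ℕ)
  | .var _ => none
  | .app none ts => (headCount (ts ⟨0, by simp [uar]⟩)).map (fun p => (p.1, p.2 + 1))
  | .app (some (_, _ + 1)) _ => none
  | .app (some (c, 0)) _ => some (c, 0)

/-- The spine `c ∘ t₁ ∘ ⋯ ∘ tₙ` occurs as a subterm of a left- or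
right-hand side of `R`. -/
def SpineIn (R : Set (ATerm C × ATerm C)) (c : C) (n : ℕ) : Prop :=
  ∃ p ∈ R, ∃ t : ATerm C, (Subterm t p.1 ∨ Subterm t p.2) ∧ headCount t = some (c, n)

/-- `aa` is the applicative-arity function of `R`: `aa c` is the maximal `n`
such that `c ∘ t₁ ∘ ⋯ ∘ tₙ` occurs in a rule of `R` (and `0` if `c` does not
occur applied). -/
def AASpec (R : Set (ATerm C × ATerm C)) (aa : C → ℕ) : Prop :=
  ∀ c : C, (∀ n, SpineIn R c n → n ≤ aa c) ∧ (aa c = 0 ∨ SpineIn R c (aa c))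

/-- A term is head variable free if no subterm is of the form `x ∘ v` with
`x` a variable. -/
def HeadVarFree (t : ATerm C) : Prop :=
  ∀ u : ATerm C, Subterm u t → ∀ (x : ℕ) (v : ATerm C), u ≠ appT (.var x) v

/-- Basic well-formedness of an applicative TRS: left-hand sides are not
variables, right-hand side variables occur on the left, and both sides are
applicative terms. -/
def IsATRS (R : Set (ATerm C × ATerm C)) : Prop :=
  ∀ p ∈ R, (∀ x : ℕ, p.1 ≠ Term.var x) ∧
    (∀ x : ℕ, Subterm (.var x) p.2 → Subterm (.var x) p.1) ∧
    ApplicativeT p.1 ∧ ApplicativeT p.2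

/-- `R` is left head variable free. -/
def LHVF (R : Set (ATerm C × ATerm C)) : Prop := ∀ p ∈ R, HeadVarFree p.1

/-- The variables `x_0, …, x_{i-1}`. -/
def uvars (i : ℕ) : Fin i → ATerm C := fun j => .var j.1

/-- The term `f_i(x_0,…,x_{i-1})`. -/
def fiT (c : C) (i : ℕ) : ATerm C := .app (some (c, i)) (fun j => .var j.1)

/-- The uncurrying system `U`, with rules
`c_i(x_1,…,x_i) ∘ y → c_{i+1}(x_1,…,x_i,y)` for all `0 ≤ i < aa c`. -/
def USys (aa : C → ℕ) : Set (ATerm C × ATerm C) :=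
  { p | ∃ (c : C) (i : ℕ), i < aa c ∧
      p = (appT (fiT c i) (.var i), fiT c (i + 1)) }

/-- The currying system `C(F)` (for a signature with arities `arF`), with
rules `f_{i+1}(x_1,…,x_i,y) → f_i(x_1,…,x_i) ∘ y` for all `0 ≤ i < arF f`
(where `f_{arF f}` plays the role of `f`). -/
def CurrySys {F : Type} (arF : F → ℕ) : Set (ATerm F × ATerm F) :=
  { p | ∃ (f : F) (i : ℕ), i < arF f ∧
      p = (fiT f (i + 1), appT (fiT f i) (.var i)) }

/-- The η-saturation `R_η` of `R` (w.r.t. applicative arities `aa`). -/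
inductive Eta (aa : C → ℕ) (R : Set (ATerm C × ATerm C)) : ATerm C × ATerm C → Prop where
  | base (p) : p ∈ R → Eta aa R p
  | eta (l r : ATerm C) (c : C) (n x : ℕ) :
      Eta aa R (l, r) → headCount l = some (c, n) → n < aa c →
      ¬ Subterm (.var x) l → ¬ Subterm (.var x) r →
      Eta aa R (appT l (.var x), appT r (.var x))

/-- The uncurried system `R_η↓`: the rules of `R_η` with both sides in
`U`-normal form. -/
def EtaDown (aa : C → ℕ) (R : Set (ATerm C × ATerm C)) : Set (ATerm C × ATerm C) :=
  { p | ∃ l r : ATerm C, Eta aa R (l, r) ∧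
      NormTo (USys aa) l p.1 ∧ NormTo (USys aa) r p.2 }

/-- The transformed system `U↓(R) = R_η↓ ∪ U(R)`. -/
def UD (aa : C → ℕ) (R : Set (ATerm C × ATerm C)) : Set (ATerm C × ATerm C) :=
  EtaDown aa R ∪ USys aa

/-- Symbols of the signature of `U↓(R)`: `∘` and `c_i` with `i ≤ aa c`. -/
def GoodSym (aa : C → ℕ) : USig C → Prop
  | none => True
  | some (c, i) => i ≤ aa c

/-- A term over the signature of `U↓(R)`. -/
def GoodTerm (aa : C → ℕ) (t : ATerm C) : Prop :=
  ∀ (u : ATerm C) (f : USig C) (ts : Fin (uar f) → ATerm C),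
    Subterm u t → u = Term.app f ts → GoodSym aa f

/-- `C'`: curry a term over the signature of `U↓(R)` and identify all
symbols `c_i` originating from the same constant `c`. -/
def curryId : ATerm C → ATerm C
  | .var x => .var x
  | .app none ts => appT (curryId (ts ⟨0, by simp [uar]⟩)) (curryId (ts ⟨1, by simp [uar]⟩))
  | .app (some (c, i)) ts =>
      (List.ofFn (fun j : Fin (uar (some (c, i))) => curryId (ts j))).foldl appT (constT c)

end ATRS

namespace UncurryAux

lemma subterm_trans {F V : Type} {ar : F → ℕ} {a b c : Term F ar V}
    (h2 : Subterm b c) : Subterm a b → Subterm a c := by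
  induction h2 with
  | refl => exact id
  | app f ts i u h ih => exact fun h1 => .app f ts i a (ih h1)

lemma subterm_subst {F V : Type} {ar : F → ℕ} {u t : Term F ar V} (σ : V → Term F ar V)
    (h : Subterm u t) : Subterm (u.subst σ) (t.subst σ) := by
  induction h with
  | refl t => exact .refl _
  | app f ts i u h ih => exact .app f (fun j => (ts j).subst σ) i _ ih

lemma subst_subst {F V : Type} {ar : F → ℕ} (t : Term F ar V) (τ σ : V → Term F ar V) :
    (t.subst τ).subst σ = t.subst (fun x => (τ x).subst σ) := by
  induction t with
  | var x => rfl
  | app f ts ih =>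
    simp only [Term.subst]
    congr 1
    funext i
    exact ih i

lemma app_update_subst {F V : Type} {ar : F → ℕ} (f : F) (ts : Fin (ar f) → Term F ar V)
    (i : Fin (ar f)) (u : Term F ar V) (σ : V → Term F ar V) :
    (fun j => ((Function.update ts i u) j).subst σ) =
      Function.update (fun j => (ts j).subst σ) i (u.subst σ) := by
  funext j
  by_cases h : j = i
  · subst h; simp
  · simp [Function.update, h]

lemma rew_subst {F V : Type} {ar : F → ℕ} {R : Set (Term F ar V × Term F ar V)}
    {s t : Term F ar V} (σ : V → Term F ar V) (h : Rew R s t) :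
    Rew R (s.subst σ) (t.subst σ) := by
  induction h with
  | rule l r τ hmem =>
    rw [subst_subst, subst_subst]
    exact .rule l r _ hmem
  | congr f ts i u h ih =>
    show Rew R (.app f fun j => (ts j).subst σ)
      (.app f fun j => ((Function.update ts i u) j).subst σ)
    rw [app_update_subst]
    exact Rew.congr (R := R) f (fun j => (ts j).subst σ) i (u.subst σ) ih

lemma rstar_subst {F V : Type} {ar : F → ℕ} {R : Set (Term F ar V × Term F ar V)}
    {s t : Term F ar V} (σ : V → Term F ar V) (h : RStar R s t) :
    RStar R (s.subst σ) (t.subst σ) := by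
  induction h with
  | refl => exact Relation.ReflTransGen.refl
  | tail _ h2 ih => exact ih.tail (rew_subst σ h2)

lemma rstar_congr {F V : Type} {ar : F → ℕ} {R : Set (Term F ar V × Term F ar V)}
    (f : F) (ts : Fin (ar f) → Term F ar V) (i : Fin (ar f)) {u : Term F ar V}
    (h : RStar R (ts i) u) :
    RStar R (.app f ts) (.app f (Function.update ts i u)) := by
  induction h with
  | refl =>
    rw [Function.update_eq_self]
    exact Relation.ReflTransGen.refl
  | @tail b c h1 h2 ih =>
    have step := Rew.congr (R := R) f (Function.update ts i b) i c (by simpa using h2)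
    rw [Function.update_idem] at step
    exact ih.tail step

lemma rstar_app {F V : Type} {ar : F → ℕ} {R : Set (Term F ar V × Term F ar V)}
    (f : F) (ts ts' : Fin (ar f) → Term F ar V)
    (h : ∀ i, RStar R (ts i) (ts' i)) :
    RStar R (.app f ts) (.app f ts') := by
  have key : ∀ s : Finset (Fin (ar f)),
      RStar R (.app f ts) (.app f (fun i => if i ∈ s then ts' i else ts i)) := by
    intro s
    induction s using Finset.induction with
    | empty =>
      have he : (fun i => if i ∈ (∅ : Finset (Fin (ar f))) then ts' i else ts i) = ts := by
        funext i; simp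
      rw [he]
      exact Relation.ReflTransGen.refl
    | @insert a s' ha ih =>
      refine ih.trans ?_
      have step := rstar_congr (R := R) f (fun i => if i ∈ s' then ts' i else ts i) a
        (u := ts' a) (by simp [ha]; exact h a)
      have heq : Function.update (fun i => if i ∈ s' then ts' i else ts i) a (ts' a)
          = (fun i => if i ∈ insert a s' then ts' i else ts i) := by
        funext j
        by_cases hj : j = a
        · subst hj; simp
        · simp [Function.update, hj]
      rwa [heq] at step
  have := key Finset.univ
  simpa using this

lemma rstar_subst_pointwise {F V : Type} {ar : F → ℕ} {R : Set (Term F ar V × Term F ar V)}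
    (t : Term F ar V) (σ σ' : V → Term F ar V) (h : ∀ x, RStar R (σ x) (σ' x)) :
    RStar R (t.subst σ) (t.subst σ') := by
  induction t with
  | var x => exact h x
  | app f ts ih => exact rstar_app f _ _ ih

lemma subterm_rew {F V : Type} {ar : F → ℕ} {R : Set (Term F ar V × Term F ar V)}
    {u t v : Term F ar V} (hsub : Subterm u t) : Rew R u v → ∃ w, Rew R t w := by
  induction hsub with
  | refl => exact fun h => ⟨v, h⟩
  | app f ts i u' h' ih =>
    exact fun h => (ih h).elim fun w hw => ⟨.app f (Function.update ts i w), .congr f ts i w hw⟩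

variable {C : Type}

lemma appT_subst (s t : ATerm C) (σ : ℕ → ATerm C) :
    (appT s t).subst σ = appT (s.subst σ) (t.subst σ) := by
  simp only [appT, Term.subst]
  congr 1
  funext k
  by_cases h : (k : Fin (uar (none : USig C))).1 = 0 <;> simp [h]

lemma fiT_subst (c : C) (i : ℕ) (σ : ℕ → ATerm C) :
    (fiT c i).subst σ = .app (some (c, i)) (fun j => σ j.1) := rfl

/-- No `U`-redex occurs in `t`. -/
def NoRed (aa : C → ℕ) (t : ATerm C) : Prop :=
  ∀ u : ATerm C, Subterm u t → ∀ ss : Fin 2 → ATerm C, u = Term.app none ss →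
    ∀ (c : C) (n : ℕ) (us : Fin n → ATerm C),
      ss ⟨0, by omega⟩ = Term.app (some (c, n)) us → ¬ n < aa c

lemma subterm_decomp {t : ATerm C} (σ : ℕ → ATerm C) {v : ATerm C}
    (h : Subterm v (t.subst σ)) :
    (∃ (f : USig C) (ts : Fin (uar f) → ATerm C),
        Subterm (Term.app f ts) t ∧ v = (Term.app f ts).subst σ) ∨
    (∃ x, Subterm (Term.var x) t ∧ Subterm v (σ x)) := by
  induction t with
  | var x => exact Or.inr ⟨x, .refl _, h⟩
  | app f ts ih =>
    cases h with
    | refl => exact Or.inl ⟨f, ts, .refl _, rfl⟩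
    | app _ _ i u h' =>
      rcases ih i h' with ⟨g, us, hsub, heq⟩ | ⟨x, hsub, hsub'⟩
      · exact Or.inl ⟨g, us, .app f ts i _ hsub, heq⟩
      · exact Or.inr ⟨x, .app f ts i _ hsub, hsub'⟩

lemma nored_of_nf {aa : C → ℕ} {t : ATerm C} (h : NF (USys aa) t) : NoRed aa t := by
  intro u hsub ss hu c n us hss hn
  set τ : ℕ → ATerm C := fun j => if hj : j < n then us ⟨j, hj⟩ else ss ⟨1, by omega⟩ with hτ
  have hu' : u = (appT (fiT c n) (.var n)).subst τ := by
    rw [hu, appT_subst, fiT_subst]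
    simp only [appT]
    congr 1
    funext k
    rcases k with ⟨kv, hk⟩
    have hk2 : kv < 2 := hk
    rcases (by omega : kv = 0 ∨ kv = 1) with rfl | rfl
    · show ss ⟨0, by omega⟩ = if (0:ℕ) = 0 then _ else _
      rw [hss, if_pos rfl]
      congr 1
      funext j
      simp [hτ, j.isLt]
    · show ss ⟨1, hk⟩ = if (1:ℕ) = 0 then _ else Term.subst τ (.var n)
      rw [if_neg one_ne_zero]
      show ss ⟨1, hk⟩ = τ n
      simp [hτ]
  have hrew : Rew (USys aa) u ((fiT c (n+1)).subst τ) := by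
    rw [hu']
    exact Rew.rule _ _ τ ⟨c, n, hn, rfl⟩
  obtain ⟨w, hw⟩ := subterm_rew hsub hrew
  exact h w hw

lemma no_rew_of_nored {aa : C → ℕ} {t v : ATerm C}
    (h : Rew (USys aa) t v) : NoRed aa t → False := by
  induction h with
  | rule l r τ hmem =>
    intro hnr
    obtain ⟨c, n, hn, hp⟩ := hmem
    have hl : l = appT (fiT c n) (.var n) := congrArg Prod.fst hp
    subst hl
    refine hnr (Term.subst τ (appT (fiT c n) (.var n))) (.refl _)
      (fun k => if (k : Fin 2).1 = 0 then Term.app (some (c,n)) (fun j => τ j.1) else τ n)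
      ?_ c n (fun j => τ j.1) (by rfl) hn
    rw [appT_subst, fiT_subst]
    rfl
  | congr f ts i u h' ih =>
    intro hnr
    exact ih (fun u hsub => hnr u (.app f ts i u hsub))

lemma nf_of_nored {aa : C → ℕ} {t : ATerm C} (h : NoRed aa t) : NF (USys aa) t :=
  fun _ hrew => (no_rew_of_nored hrew h).elim

lemma rew_ne_var {aa : C → ℕ} {u v : ATerm C} (h : Rew (USys aa) u v) (x : ℕ) :
    v ≠ .var x := by
  cases h with
  | rule l r τ hmem =>
    obtain ⟨c, n, hn, hp⟩ := hmem
    have hr : r = fiT c (n+1) := congrArg Prod.snd hp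
    subst hr
    rw [fiT_subst]
    exact fun heq => by cases heq
  | congr f ts i u h' => exact fun heq => by cases heq

lemma subterm_var_spine (c : C) (n k : ℕ) (hk : k ≤ n) :
    Subterm (Term.var k : ATerm C) (appT (fiT c n) (.var n)) := by
  rcases eq_or_lt_of_le hk with rfl | hk
  · refine .app none _ ⟨1, by show (1:ℕ) < 2; omega⟩ _ ?_
    show Subterm (Term.var k : ATerm C) (if (1:ℕ) = 0 then fiT c k else .var k)
    rw [if_neg one_ne_zero]
    exact .refl _
  · refine .app none _ ⟨0, by show (0:ℕ) < 2; omega⟩ _ ?_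
    show Subterm (Term.var k : ATerm C) (if (0:ℕ) = 0 then fiT c n else .var n)
    rw [if_pos rfl]
    exact .app (some (c, n)) _ ⟨k, hk⟩ _ (.refl _)

lemma hvf_rew {aa : C → ℕ} {t v : ATerm C} (hh : HeadVarFree t)
    (h : Rew (USys aa) t v) : HeadVarFree v := by
  induction h with
  | rule l r τ hmem =>
    obtain ⟨c, n, hn, hp⟩ := hmem
    have hl : l = appT (fiT c n) (.var n) := congrArg Prod.fst hp
    have hr : r = fiT c (n+1) := congrArg Prod.snd hp
    subst hl hr
    intro u hsub x w hu
    rw [fiT_subst] at hsub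
    cases hsub with
    | refl =>
      simp only [appT] at hu
      injection hu with h1 h2
      exact nomatch h1
    | app g ts2 j u2 hsub' =>
      have hj2 : (j : Fin (n+1)).1 < n + 1 := j.isLt
      have hjn : (j : Fin (n+1)).1 ≤ n := by omega
      have : Subterm (τ (j : Fin (n+1)).1) ((appT (fiT c n) (.var n)).subst τ) :=
        subterm_subst τ (subterm_var_spine c n _ hjn)
      exact hh u (subterm_trans this hsub') x w hu
  | congr f ts i u' h' ih =>
    have hts : ∀ j, HeadVarFree (ts j) := fun j u hsub x w => hh u (.app f ts j u hsub) x w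
    have hu' : HeadVarFree u' := ih (hts i)
    intro u hsub x w hequ
    cases hsub with
    | refl =>
      simp only [appT] at hequ
      injection hequ with h1 h2
      subst h1
      have h2' := eq_of_heq h2
      have h0 : Function.update ts i u' ⟨0, by show (0:ℕ) < 2; omega⟩ = Term.var x := by
        rw [h2']
        rfl
      by_cases hi : i = ⟨0, by show (0:ℕ) < 2; omega⟩
      · subst hi
        rw [Function.update_self] at h0
        exact rew_ne_var h' x h0
      · rw [Function.update_of_ne (Ne.symm hi)] at h0
        refine (hh (.app none ts) (.refl _) x (ts ⟨1, by show (1:ℕ) < 2; omega⟩) ?_).elim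
        simp only [appT]
        congr 1
        funext k
        rcases k with ⟨kv, hk⟩
        have hk2 : kv < 2 := hk
        rcases (by omega : kv = 0 ∨ kv = 1) with rfl | rfl
        · show ts ⟨0, hk⟩ = if (0:ℕ) = 0 then _ else _
          rw [if_pos rfl]
          exact h0
        · show ts ⟨1, hk⟩ = if (1:ℕ) = 0 then _ else ts ⟨1, _⟩
          rw [if_neg one_ne_zero]
    | app g ts2 j u2 hsub' =>
      by_cases hj : j = i
      · subst hj
        exact hu' u (by simpa using hsub') x w hequ
      · have hup : Function.update ts i u' j = ts j := Function.update_of_ne hj _ _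
        exact hts j u (hup ▸ hsub') x w hequ

lemma hvf_rstar {aa : C → ℕ} {t v : ATerm C} (hh : HeadVarFree t)
    (h : RStar (USys aa) t v) : HeadVarFree v := by
  induction h with
  | refl => exact hh
  | tail _ h2 ih => exact hvf_rew ih h2

end UncurryAux

/-- for a head variable free term `t`,
`(t↓_U)(σ↓_U) = (tσ)↓_U`. -/
theorem uncurry_subst {C : Type} (R : Set (ATerm C × ATerm C)) (aa : C → ℕ)
    (hR : IsATRS R) (haa : AASpec R aa)
    (t t' : ATerm C) (σ σ' : ℕ → ATerm C)
    (ht : HeadVarFree t)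
    (htd : NormTo (USys aa) t t')
    (hσ : ∀ x, NormTo (USys aa) (σ x) (σ' x)) :
    NormTo (USys aa) (t.subst σ) (t'.subst σ') := by
  obtain ⟨hstar, hnf⟩ := htd
  have hvf' : HeadVarFree t' := UncurryAux.hvf_rstar ht hstar
  have h1 : RStar (USys aa) (t.subst σ) (t'.subst σ) := UncurryAux.rstar_subst σ hstar
  have h2 : RStar (USys aa) (t'.subst σ) (t'.subst σ') :=
    UncurryAux.rstar_subst_pointwise t' σ σ' (fun x => (hσ x).1)
  refine ⟨h1.trans h2, UncurryAux.nf_of_nored ?_⟩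
  intro v hsub ss hv c n us hss hn
  rcases UncurryAux.subterm_decomp σ' hsub with ⟨g, ws, hsubt, heq⟩ | ⟨x, hx, hsx⟩
  · rw [heq] at hv
    have hv' : Term.app g (fun k => (ws k).subst σ') = Term.app none ss := hv
    injection hv' with hg hws
    subst hg
    have hws' := eq_of_heq hws
    have hw0 : (ws ⟨0, by show (0:ℕ) < 2; omega⟩).subst σ' = Term.app (some (c, n)) us := by
      rw [← hss, ← hws']
      rfl
    cases hws0 : ws ⟨0, by show (0:ℕ) < 2; omega⟩ with
    | var x =>
      refine (hvf' (Term.app none ws) hsubt x (ws ⟨1, by show (1:ℕ) < 2; omega⟩) ?_).elim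
      simp only [appT]
      congr 1
      funext k
      rcases k with ⟨kv, hk⟩
      have hk2 : kv < 2 := hk
      rcases (by omega : kv = 0 ∨ kv = 1) with rfl | rfl
      · show ws ⟨0, hk⟩ = if (0:ℕ) = 0 then _ else _
        rw [if_pos rfl]
        exact hws0
      · show ws ⟨1, hk⟩ = if (1:ℕ) = 0 then _ else ws ⟨1, _⟩
        rw [if_neg one_ne_zero]
    | app g' ws' =>
      rw [hws0] at hw0
      have hw0' : Term.app g' (fun k => (ws' k).subst σ') = Term.app (some (c, n)) us := hw0
      injection hw0' with hg' _
      subst hg'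
      exact UncurryAux.nored_of_nf hnf (Term.app none ws) hsubt ws rfl c n ws' hws0 hn
  · exact UncurryAux.nored_of_nf (hσ x).2 v hsx ss hv c n us hss hn
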